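/- Let M be a bounded non-negative self-adjoint operator and B ≤ 0 a self-adjoint operator in a Hilbert space G with ran M^{1/2} ⊂ dom B. Then 1 ∈ ρ(BM) (where BM is the bounded everywhere defined closure of the product). -/

import Mathlib

open scoped InnerProductSpace

/-- Let `M ≥ 0` be bounded self-adjoint with non-negative square root
`R = M^{1/2}` and let `B ≤ 0` be self-adjoint with `ran M^{1/2} ⊆ dom B`.  Then
`1 ∈ ρ(BM)`, where `BM = (B M^{1/2}) M^{1/2}` is the bounded everywhere defined
closure of the product. -/
theorem stmt5
    {G : Type*} [NormedAddCommGroup G] [InnerProductSpace ℂ G] [CompleteSpace G]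
    (M R : G →L[ℂ] G)
    (hM : IsSelfAdjoint M) (hMnn : ∀ x : G, 0 ≤ (⟪M x, x⟫_ℂ).re)
    (hR : IsSelfAdjoint R) (hRnn : ∀ x : G, 0 ≤ (⟪R x, x⟫_ℂ).re)
    (hRR : R ∘L R = M)
    (B : G →ₗ.[ℂ] G) (hBsa : IsSelfAdjoint B)
    (hBneg : ∀ φ : B.domain, (⟪B φ, (φ : G)⟫_ℂ).re ≤ 0)
    (hranR : ∀ x : G, R x ∈ B.domain)
    (BR : G →L[ℂ] G) (hBR : ∀ x : G, BR x = B ⟨R x, hranR x⟩) :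
    (1 : ℂ) ∉ spectrum ℂ (BR ∘L R) := by
  intro h1
  -- move to the swapped product `R ∘L BR`
  have hswap : (1 : ℂ) ∈ spectrum ℂ (R ∘L BR) := by
    have := spectrum.nonzero_mul_comm (𝕜 := ℂ) BR R
    have h1' : (1 : ℂ) ∈ spectrum ℂ (BR * R) \ {0} := ⟨h1, by simp⟩
    rw [this] at h1'
    exact h1'.1
  -- the operator `T = R ∘L BR` satisfies `re ⟪T x, x⟫ ≤ 0`
  set T : G →L[ℂ] G := R ∘L BR with hT
  have hTneg : ∀ x : G, (⟪T x, x⟫_ℂ).re ≤ 0 := by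
    intro x
    have h1 : ⟪T x, x⟫_ℂ = ⟪BR x, R x⟫_ℂ := by
      simpa [hT] using hR.isSymmetric (BR x) x
    have h2 : (⟪BR x, R x⟫_ℂ).re ≤ 0 := by
      have := hBneg ⟨R x, hranR x⟩
      rwa [← hBR x] at this
    rw [h1]; exact h2
  -- hence `1 - T` is invertible
  have hunit : IsUnit (algebraMap ℂ (G →L[ℂ] G) 1 - T) := by
    rw [map_one]
    refine ContinuousLinearMap.isUnit_of_forall_le_norm_inner_map _ (c := 1)
      one_pos fun x => ?_
    have hre : (‖x‖ : ℝ) ^ 2 ≤ (⟪(1 - T) x, x⟫_ℂ).re := by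
      have : ⟪(1 - T) x, x⟫_ℂ = ⟪x, x⟫_ℂ - ⟪T x, x⟫_ℂ := by
        simp [inner_sub_left]
      rw [this, Complex.sub_re]
      have hx : (⟪x, x⟫_ℂ).re = ‖x‖ ^ 2 := by
        simpa using inner_self_eq_norm_sq (𝕜 := ℂ) x
      rw [hx]
      linarith [hTneg x]
    calc ‖x‖ ^ 2 * (1 : NNReal) = ‖x‖ ^ 2 := by simp
      _ ≤ (⟪(1 - T) x, x⟫_ℂ).re := hre
      _ ≤ ‖⟪(1 - T) x, x⟫_ℂ‖ := by
        simpa using Complex.re_le_norm ⟪(1 - T) x, x⟫_ℂ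
  exact (spectrum.notMem_iff.mpr hunit) hswap
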